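/- Let Ω be a topological space with Borel σ-algebra F, P ⊆ ca₊¹(Ω,F) a tight family of Borel probability measures, and define E(X) := sup_{μ∈P} ∫X dμ for X ∈ C_b(Ω). Then the sublinear pre-expectation E is continuous from above: if Xₙ ∈ C_b(Ω), Xₙ ↓ X pointwise with X ∈ C_b(Ω), then E(Xₙ) ↓ E(X). -/

import Mathlib

open Filter MeasureTheory

lemma real_iSup_empty {p : Prop} (hp : ¬ p) (f : p → ℝ) : (⨆ h : p, f h) = 0 := by
  haveI : IsEmpty p := ⟨hp⟩
  rw [iSup, Set.range_eq_empty, Real.sSup_empty]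

/-- Dini-type lemma on a compact set: if continuous functions decrease pointwise to `0`,
then they are eventually uniformly `< ε` on any compact set. -/
lemma dini_aux {Ω : Type*} [TopologicalSpace Ω] {K : Set Ω} (hK : IsCompact K)
    (g : ℕ → Ω → ℝ) (hg : ∀ n, Continuous (g n)) (hanti : ∀ ω, Antitone fun n => g n ω)
    (hlim : ∀ ω, Tendsto (fun n => g n ω) atTop (nhds (0 : ℝ)))
    {ε : ℝ} (hε : 0 < ε) :
    ∃ N : ℕ, ∀ n ≥ N, ∀ x ∈ K, g n x < ε := by
  have hex : ∀ ω : Ω, ∃ n : ℕ, g n ω < ε := fun ω =>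
    ((hlim ω).eventually (gt_mem_nhds hε)).exists
  choose m hm using hex
  have hcov : K ⊆ ⋃ ω : Ω, g (m ω) ⁻¹' Set.Iio ε := fun x _ =>
    Set.mem_iUnion.2 ⟨x, hm x⟩
  obtain ⟨t, ht⟩ := hK.elim_finite_subcover (fun ω : Ω => g (m ω) ⁻¹' Set.Iio ε)
    (fun ω => (hg (m ω)).isOpen_preimage _ isOpen_Iio) hcov
  refine ⟨t.sup m, fun n hn x hx => ?_⟩
  obtain ⟨ω, hωt, hxω⟩ := Set.mem_iUnion₂.1 (ht hx)
  have h1 : m ω ≤ n := le_trans (Finset.le_sup hωt) hn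
  exact lt_of_le_of_lt (hanti x h1) hxω

theorem stmt11 {Ω : Type*} [TopologicalSpace Ω] [MeasurableSpace Ω] [BorelSpace Ω]
    (P : Set (Measure Ω))
    (hP : ∀ μ ∈ P, IsProbabilityMeasure μ)
    (htight : ∀ ε : ℝ, 0 < ε →
      ∃ K : Set Ω, IsCompact K ∧ ∀ μ ∈ P, μ Kᶜ ≤ ENNReal.ofReal ε)
    (X : ℕ → BoundedContinuousFunction Ω ℝ) (X₀ : BoundedContinuousFunction Ω ℝ)
    (hanti : ∀ ω, Antitone fun n => X n ω)
    (hlim : ∀ ω, Tendsto (fun n => X n ω) atTop (nhds (X₀ ω))) :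
    Tendsto (fun n => ⨆ μ ∈ P, ∫ ω, X n ω ∂μ) atTop
      (nhds (⨆ μ ∈ P, ∫ ω, X₀ ω ∂μ)) := by
  -- pointwise lower bound: X₀ ≤ X n
  have hle : ∀ n ω, X₀ ω ≤ X n ω := fun n ω =>
    le_of_tendsto (hlim ω) (eventually_atTop.2 ⟨n, fun m hm => hanti ω hm⟩)
  -- boundedness of the families of integrals
  have hbdd : ∀ (Y : BoundedContinuousFunction Ω ℝ),
      ∀ μ, (⨆ _ : μ ∈ P, ∫ ω, Y ω ∂μ) ≤ ‖Y‖ := by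
    intro Y μ
    refine Real.iSup_le (fun hμ => ?_) (norm_nonneg Y)
    haveI := hP μ hμ
    calc ∫ ω, Y ω ∂μ ≤ |∫ ω, Y ω ∂μ| := le_abs_self _
      _ ≤ ‖Y‖ := Y.norm_integral_le_norm μ
  have hBdd : ∀ (Y : BoundedContinuousFunction Ω ℝ),
      BddAbove (Set.range fun μ => ⨆ _ : μ ∈ P, ∫ ω, Y ω ∂μ) := by
    intro Y
    exact ⟨‖Y‖, by rintro x ⟨μ, rfl⟩; exact hbdd Y μ⟩
  -- the zero measure is not in P
  have h0P : (0 : Measure Ω) ∉ P := by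
    intro h
    have := (hP 0 h).measure_univ
    simp at this
  -- nonnegativity of the sups
  have hsup_nonneg : ∀ (Y : BoundedContinuousFunction Ω ℝ),
      0 ≤ ⨆ μ ∈ P, ∫ ω, Y ω ∂μ := by
    intro Y
    have h1 : (⨆ _ : (0 : Measure Ω) ∈ P, ∫ ω, Y ω ∂(0 : Measure Ω)) = 0 := by
      exact real_iSup_empty h0P _
    calc (0 : ℝ) = ⨆ _ : (0 : Measure Ω) ∈ P, ∫ ω, Y ω ∂(0 : Measure Ω) := h1.symm
      _ ≤ ⨆ μ ∈ P, ∫ ω, Y ω ∂μ := le_ciSup (hBdd Y) 0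
  -- monotonicity: sup for X₀ ≤ sup for X n
  have hmono : ∀ n, (⨆ μ ∈ P, ∫ ω, X₀ ω ∂μ) ≤ ⨆ μ ∈ P, ∫ ω, X n ω ∂μ := by
    intro n
    refine ciSup_mono (hBdd (X n)) (fun μ => ?_)
    by_cases hμ : μ ∈ P
    · rw [ciSup_pos hμ, ciSup_pos hμ]
      haveI := hP μ hμ
      exact integral_mono (X₀.integrable μ) ((X n).integrable μ) (hle n)
    · rw [real_iSup_empty hμ, real_iSup_empty hμ]
  rw [Metric.tendsto_atTop]
  intro ε hε
  set C : ℝ := ‖X 0 - X₀‖ with hC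
  have hC0 : 0 ≤ C := norm_nonneg _
  set δ : ℝ := ε / (4 * (C + 1)) with hδ
  have hδ0 : 0 < δ := by positivity
  obtain ⟨K, hK, hKc⟩ := htight δ hδ0
  -- Dini on K for g n = X n - X₀
  obtain ⟨N, hN⟩ := dini_aux hK (fun n x => X n x - X₀ x)
    (fun n => ((X n).continuous.sub X₀.continuous))
    (fun ω _ _ h => sub_le_sub_right (hanti ω h) _)
    (fun ω => by simpa using (hlim ω).sub_const (X₀ ω))
    (show (0:ℝ) < ε/4 by positivity)
  refine ⟨N, fun n hn => ?_⟩
  -- key estimate for each μ ∈ P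
  have hkey : ∀ μ ∈ P, ∫ ω, X n ω ∂μ ≤ (∫ ω, X₀ ω ∂μ) + ε / 2 := by
    intro μ hμ
    haveI := hP μ hμ
    have hint : Integrable (fun ω => X n ω - X₀ ω) μ :=
      ((X n).integrable μ).sub (X₀.integrable μ)
    set S : Set Ω := MeasureTheory.toMeasurable μ Kᶜ with hSdef
    have hS : MeasurableSet S := measurableSet_toMeasurable μ Kᶜ
    have hScK : Sᶜ ⊆ K := by
      intro x hx
      by_contra hxK
      exact hx (subset_toMeasurable μ Kᶜ hxK)
    have hSm : μ S = μ Kᶜ := measure_toMeasurable Kᶜ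
    have hsplit : ∫ ω, (X n ω - X₀ ω) ∂μ
        = (∫ ω in S, (X n ω - X₀ ω) ∂μ) + ∫ ω in Sᶜ, (X n ω - X₀ ω) ∂μ :=
      (integral_add_compl hS hint).symm
    have hKpart : (∫ ω in Sᶜ, (X n ω - X₀ ω) ∂μ) ≤ ε / 4 := by
      have h1 : (∫ ω in Sᶜ, (X n ω - X₀ ω) ∂μ) ≤ ∫ _ in Sᶜ, (ε/4 : ℝ) ∂μ :=
        setIntegral_mono_on hint.integrableOn
          (integrableOn_const (measure_ne_top μ Sᶜ))
          hS.compl (fun x hx => le_of_lt (hN n hn x (hScK hx)))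
      have h2 : (∫ _ in Sᶜ, (ε/4 : ℝ) ∂μ) = (μ Sᶜ).toReal * (ε/4) := by
        rw [setIntegral_const, smul_eq_mul]; rfl
      have h3 : (μ Sᶜ).toReal ≤ 1 := by
        have := ENNReal.toReal_mono (measure_ne_top μ Set.univ)
          (measure_mono (Set.subset_univ Sᶜ))
        simpa using this
      rw [h2] at h1
      nlinarith
    have hCb : ∀ x, X n x - X₀ x ≤ C := by
      intro x
      calc X n x - X₀ x ≤ X 0 x - X₀ x := sub_le_sub_right (hanti x (Nat.zero_le n)) _
        _ = (X 0 - X₀) x := by simp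
        _ ≤ |(X 0 - X₀) x| := le_abs_self _
        _ ≤ C := (X 0 - X₀).norm_coe_le_norm x
    have hKcpart : (∫ ω in S, (X n ω - X₀ ω) ∂μ) ≤ ε / 4 := by
      have h1 : (∫ ω in S, (X n ω - X₀ ω) ∂μ) ≤ ∫ _ in S, C ∂μ :=
        setIntegral_mono_on hint.integrableOn
          (integrableOn_const (measure_ne_top μ S))
          hS (fun x _ => hCb x)
      have h2 : (∫ _ in S, C ∂μ) = (μ S).toReal * C := by
        rw [setIntegral_const, smul_eq_mul]; rfl
      have h3 : (μ S).toReal ≤ δ := by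
        rw [hSm]
        exact ENNReal.toReal_le_of_le_ofReal hδ0.le (hKc μ hμ)
      have h4 : δ * (C + 1) = ε / 4 := by
        rw [hδ]; field_simp
      have h5 : (μ S).toReal * C ≤ δ * C :=
        mul_le_mul_of_nonneg_right h3 hC0
      nlinarith [ENNReal.toReal_nonneg (a := μ S)]
    have hsub : (∫ ω, X n ω ∂μ) - ∫ ω, X₀ ω ∂μ = ∫ ω, (X n ω - X₀ ω) ∂μ :=
      (integral_sub ((X n).integrable μ) (X₀.integrable μ)).symm
    linarith [hsplit, hKpart, hKcpart, hsub]
  -- conclude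
  have hup : (⨆ μ ∈ P, ∫ ω, X n ω ∂μ) ≤ (⨆ μ ∈ P, ∫ ω, X₀ ω ∂μ) + ε / 2 := by
    have hpos : (0:ℝ) ≤ (⨆ μ ∈ P, ∫ ω, X₀ ω ∂μ) + ε / 2 := by
      have := hsup_nonneg X₀; linarith
    refine Real.iSup_le (fun μ => Real.iSup_le (fun hμ => ?_) hpos) hpos
    have h1 : (∫ ω, X₀ ω ∂μ) ≤ ⨆ μ ∈ P, ∫ ω, X₀ ω ∂μ := by
      have h2 : (⨆ _ : μ ∈ P, ∫ ω, X₀ ω ∂μ) ≤ ⨆ μ ∈ P, ∫ ω, X₀ ω ∂μ :=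
        le_ciSup (hBdd X₀) μ
      rwa [ciSup_pos hμ] at h2
    linarith [hkey μ hμ]
  have hlo := hmono n
  rw [Real.dist_eq, abs_of_nonneg (by linarith)]
  linarith
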